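/- Let E, F be complex Banach spaces, U a nonempty open subset of E, and 1 ≤ p < ∞. For every bounded holomorphic function g : U → ℂ and every y ∈ F, the mapping g·y : U → F defined by (g·y)(x) = g(x)·y is a holomorphic mapping with relatively p-compact range, and m_p((g·y)(U)) = ‖g‖_∞ · ‖y‖, where ‖g‖_∞ = sup_{x∈U} |g(x)|. -/

import Mathlib

noncomputable section

open Filter Topology

/-- Membership of a scalar sequence in the coefficient ball: the closed unit ball of `c₀`
when `p = 1`, and the closed unit ball of `ℓ_{p*}` (with `p* = p/(p-1)`) when `p ≠ 1`. -/
def InCoefBall (p : ℝ) (a : ℕ → ℂ) : Prop :=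
  (p = 1 ∧ (∀ n, ‖a n‖ ≤ 1) ∧ Filter.Tendsto (fun n => ‖a n‖) Filter.atTop (nhds 0)) ∨
  (p ≠ 1 ∧ Summable (fun n => ‖a n‖ ^ (p / (p - 1))) ∧ (∑' n, ‖a n‖ ^ (p / (p - 1))) ≤ 1)

/-- The `p`-convex hull of a sequence `y` in `F`. -/
def pConv {F : Type*} [NormedAddCommGroup F] [NormedSpace ℂ F] (p : ℝ) (y : ℕ → F) :
    Set F :=
  {z | ∃ a : ℕ → ℂ, InCoefBall p a ∧ HasSum (fun n => a n • y n) z}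

/-- A set `K ⊆ F` is relatively `p`-compact if it is contained in the `p`-convex hull of a
sequence `y` with `∑ ‖y n‖ ^ p < ∞`. -/
def RelPCompact {F : Type*} [NormedAddCommGroup F] [NormedSpace ℂ F] (p : ℝ)
    (K : Set F) : Prop :=
  ∃ y : ℕ → F, Summable (fun n => ‖y n‖ ^ p) ∧ K ⊆ pConv p y

/-- The measure `m_p(K)` of the size of a relatively `p`-compact set `K`. -/
def mp {F : Type*} [NormedAddCommGroup F] [NormedSpace ℂ F] (p : ℝ) (K : Set F) : ℝ :=
  sInf {r | ∃ y : ℕ → F, Summable (fun n => ‖y n‖ ^ p) ∧ K ⊆ pConv p y ∧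
    r = (∑' n, ‖y n‖ ^ p) ^ (1 / p)}

/-- A coefficient sequence supported at `0` with value of norm at most `1` lies in the
coefficient ball. -/
lemma inCoefBall_single {p : ℝ} (hp : 1 ≤ p) (c : ℂ) (hc : ‖c‖ ≤ 1) :
    InCoefBall p (fun n => if n = 0 then c else 0) := by
  by_cases hp1 : p = 1
  · left
    refine ⟨hp1, fun n => ?_, ?_⟩
    · by_cases h : n = 0
      · simpa [h] using hc
      · simp [h]
    · have hev : (fun _ : ℕ => (0 : ℝ)) =ᶠ[Filter.atTop] fun n => ‖if n = 0 then c else 0‖ := by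
        filter_upwards [Filter.eventually_gt_atTop 0] with n hn
        simp [Nat.pos_iff_ne_zero.mp hn]
      exact tendsto_const_nhds.congr' hev
  · right
    have hp1' : 1 < p := lt_of_le_of_ne hp (Ne.symm hp1)
    have hq0 : 0 < p / (p - 1) := div_pos (lt_trans one_pos hp1') (sub_pos.mpr hp1')
    have heq : (fun n => ‖(if n = 0 then c else 0 : ℂ)‖ ^ (p / (p - 1))) =
        fun n => if n = 0 then ‖c‖ ^ (p / (p - 1)) else 0 := by
      funext n
      by_cases h : n = 0 <;> simp [h, Real.zero_rpow hq0.ne']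
    refine ⟨hp1, ?_, ?_⟩
    · rw [heq]; exact (hasSum_ite_eq 0 _).summable
    · rw [heq, tsum_ite_eq]
      exact Real.rpow_le_one (norm_nonneg c) hc hq0.le

/-- For a bounded holomorphic function `g : U → ℂ` and `y ∈ F`, the mapping `g · y` has
relatively `p`-compact range and `m_p((g·y)(U)) = ‖g‖_∞ ‖y‖`. -/
theorem pcompact_range_smul {E F : Type*}
    [NormedAddCommGroup E] [NormedSpace ℂ E] [CompleteSpace E]
    [NormedAddCommGroup F] [NormedSpace ℂ F] [CompleteSpace F]
    (U : Set E) (hU : IsOpen U) (hUne : U.Nonempty) (p : ℝ) (hp : 1 ≤ p)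
    (g : E → ℂ) (hg : DifferentiableOn ℂ g U) (hgb : ∃ C, ∀ x ∈ U, ‖g x‖ ≤ C)
    (y : F) :
    DifferentiableOn ℂ (fun x => g x • y) U ∧
    RelPCompact p ((fun x => g x • y) '' U) ∧
    mp p ((fun x => g x • y) '' U) = sSup ((fun x => ‖g x‖) '' U) * ‖y‖ := by
  obtain ⟨C, hC⟩ := hgb
  set M : ℝ := sSup ((fun x => ‖g x‖) '' U) with hMdef
  have hbdd : BddAbove ((fun x => ‖g x‖) '' U) := ⟨C, by rintro _ ⟨x, hx, rfl⟩; exact hC x hx⟩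
  have hne : ((fun x => ‖g x‖) '' U).Nonempty := hUne.image _
  have hleM : ∀ x ∈ U, ‖g x‖ ≤ M := fun x hx => le_csSup hbdd ⟨x, hx, rfl⟩
  have hM0 : 0 ≤ M := by
    obtain ⟨x, hx⟩ := hUne
    exact le_trans (norm_nonneg _) (hleM x hx)
  have hp0 : (0 : ℝ) < p := lt_of_lt_of_le one_pos hp
  -- the witness sequence
  set Y : ℕ → F := fun n => if n = 0 then (M : ℂ) • y else 0 with hYdef
  have hY0 : ‖((M : ℂ) • y)‖ = M * ‖y‖ := by
    rw [norm_smul, Complex.norm_real, Real.norm_eq_abs, abs_of_nonneg hM0]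
  have hYnorm : (fun n => ‖Y n‖ ^ p) = fun n => if n = 0 then (M * ‖y‖) ^ p else 0 := by
    funext n
    by_cases h : n = 0
    · rw [show Y n = (M : ℂ) • y from by simp [hYdef, h], hY0, if_pos h]
    · rw [show Y n = 0 from by simp [hYdef, h], if_neg h, norm_zero,
        Real.zero_rpow hp0.ne']
  have hYsum : Summable fun n => ‖Y n‖ ^ p := by
    rw [hYnorm]; exact (hasSum_ite_eq 0 _).summable
  have hYtsum : (∑' n, ‖Y n‖ ^ p) = (M * ‖y‖) ^ p := by
    rw [hYnorm]; exact tsum_ite_eq 0 _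
  -- image is contained in the p-convex hull of Y
  have hsub : ((fun x => g x • y) '' U) ⊆ pConv p Y := by
    rintro _ ⟨x, hx, rfl⟩
    by_cases hM : M = 0
    · have hgx : g x = 0 := by
        have h := hleM x hx
        rw [hM] at h
        exact norm_le_zero_iff.mp h
      refine ⟨fun n => if n = 0 then 0 else 0, inCoefBall_single hp 0 (by simp), ?_⟩
      have heq : (fun n => (if n = 0 then (0 : ℂ) else 0) • Y n) =
          fun n => if n = 0 then g x • y else 0 := by
        funext n
        by_cases h : n = 0 <;> simp [h, hgx]
      rw [heq]
      exact hasSum_ite_eq 0 _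
    · have hMc : (M : ℂ) ≠ 0 := Complex.ofReal_ne_zero.mpr hM
      have hle1 : ‖g x / (M : ℂ)‖ ≤ 1 := by
        rw [norm_div]
        have hMn : ‖(M : ℂ)‖ = M := by
          rw [Complex.norm_real, Real.norm_eq_abs, abs_of_nonneg hM0]
        rw [hMn]
        exact div_le_one_of_le₀ (hleM x hx) hM0
      refine ⟨fun n => if n = 0 then g x / (M : ℂ) else 0, inCoefBall_single hp _ hle1, ?_⟩
      have heq : (fun n => (if n = 0 then g x / (M : ℂ) else 0) • Y n) =
          fun n => if n = 0 then g x • y else 0 := by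
        funext n
        by_cases h : n = 0
        · simp only [h, if_pos, hYdef, smul_smul, div_mul_cancel₀ _ hMc]
        · simp [h]
      rw [heq]
      exact hasSum_ite_eq 0 _
  -- the value M * ‖y‖ belongs to the defining set of mp
  have hmem : M * ‖y‖ ∈ {r | ∃ z : ℕ → F, Summable (fun n => ‖z n‖ ^ p) ∧
      ((fun x => g x • y) '' U) ⊆ pConv p z ∧ r = (∑' n, ‖z n‖ ^ p) ^ (1 / p)} := by
    refine ⟨Y, hYsum, hsub, ?_⟩
    rw [hYtsum, ← Real.rpow_mul (mul_nonneg hM0 (norm_nonneg y)), mul_one_div,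
      div_self hp0.ne', Real.rpow_one]
  -- lower bound: every element of the defining set is at least M * ‖y‖
  have hlow : ∀ r ∈ {r | ∃ z : ℕ → F, Summable (fun n => ‖z n‖ ^ p) ∧
      ((fun x => g x • y) '' U) ⊆ pConv p z ∧ r = (∑' n, ‖z n‖ ^ p) ^ (1 / p)},
      M * ‖y‖ ≤ r := by
    rintro r ⟨Z, hZsum, hZsub, rfl⟩
    set S : ℝ := ∑' n, ‖Z n‖ ^ p with hSdef
    have hS0 : 0 ≤ S := tsum_nonneg fun n => Real.rpow_nonneg (norm_nonneg _) p
    -- pointwise bound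
    have hpt : ∀ x ∈ U, ‖g x‖ * ‖y‖ ≤ S ^ (1 / p) := by
      intro x hx
      obtain ⟨a, hain, hsuma⟩ := hZsub ⟨x, hx, rfl⟩
      have hnorm_eq : ‖g x‖ * ‖y‖ = ‖g x • y‖ := (norm_smul _ _).symm
      rcases eq_or_lt_of_le hS0 with hS | hS
      · -- S = 0 : all Z n vanish
        have hZ0 : ∀ n, Z n = 0 := by
          intro n
          have h1 : ‖Z n‖ ^ p ≤ 0 := by
            rw [hS]
            exact Summable.le_tsum hZsum n fun m _ => Real.rpow_nonneg (norm_nonneg _) p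
          have h2 : ‖Z n‖ ^ p = 0 :=
            le_antisymm h1 (Real.rpow_nonneg (norm_nonneg _) p)
          exact norm_eq_zero.mp ((Real.rpow_eq_zero (norm_nonneg _) hp0.ne').mp h2)
        have hzero : g x • y = 0 := by
          have h0 : HasSum (fun n => a n • Z n) 0 := by
            have heq : (fun n => a n • Z n) = fun _ => 0 := by
              funext n; rw [hZ0 n, smul_zero]
            rw [heq]; exact hasSum_zero
          exact hsuma.unique h0
        rw [hnorm_eq, hzero, norm_zero]
        exact Real.rpow_nonneg hS0 _
      · -- S > 0
        rcases hain with ⟨hp1, habound, -⟩ | ⟨hp1, hasum, hatsum⟩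
        · -- p = 1
          subst hp1
          have hZsum1 : Summable fun n => ‖Z n‖ := by
            simpa [Real.rpow_one] using hZsum
          have hsn : Summable fun n => ‖a n • Z n‖ := by
            refine Summable.of_nonneg_of_le (fun n => norm_nonneg _) (fun n => ?_) hZsum1
            rw [norm_smul]
            exact mul_le_of_le_one_left (norm_nonneg _) (habound n)
          calc ‖g x‖ * ‖y‖ = ‖g x • y‖ := hnorm_eq
            _ = ‖∑' n, a n • Z n‖ := by rw [hsuma.tsum_eq]
            _ ≤ ∑' n, ‖a n • Z n‖ := norm_tsum_le_tsum_norm hsn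
            _ ≤ ∑' n, ‖Z n‖ := by
                refine Summable.tsum_le_tsum (fun n => ?_) hsn hZsum1
                rw [norm_smul]
                exact mul_le_of_le_one_left (norm_nonneg _) (habound n)
            _ = S := by simp [hSdef, Real.rpow_one]
            _ = S ^ ((1:ℝ) / 1) := by simp
        · -- p > 1
          have hp1' : 1 < p := lt_of_le_of_ne hp (Ne.symm hp1)
          set q : ℝ := p / (p - 1) with hqdef
          have hconj : p.HolderConjugate q :=
            (Real.holderConjugate_iff_eq_conjExponent hp1').mpr rfl
          have hq0 : 0 < q := hconj.symm.pos
          set t : ℝ := S ^ (1 / p) with htdef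
          have ht0 : 0 < t := Real.rpow_pos_of_pos hS _
          have htp : t ^ p = S := by
            rw [htdef, ← Real.rpow_mul hS0, one_div_mul_cancel hp0.ne', Real.rpow_one]
          have hyoung : ∀ n, ‖a n • Z n‖ ≤
              t * (‖a n‖ ^ q / q) + t * (‖Z n‖ ^ p / (S * p)) := by
            intro n
            have h1 : ‖a n • Z n‖ = t * (‖a n‖ * (‖Z n‖ / t)) := by
              rw [norm_smul]; field_simp
            have h2 : ‖a n‖ * (‖Z n‖ / t) ≤ ‖a n‖ ^ q / q + (‖Z n‖ / t) ^ p / p :=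
              Real.young_inequality_of_nonneg (norm_nonneg _)
                (div_nonneg (norm_nonneg _) ht0.le) hconj.symm
            have h3 : (‖Z n‖ / t) ^ p = ‖Z n‖ ^ p / S := by
              rw [Real.div_rpow (norm_nonneg _) ht0.le, htp]
            calc ‖a n • Z n‖ = t * (‖a n‖ * (‖Z n‖ / t)) := h1
              _ ≤ t * (‖a n‖ ^ q / q + (‖Z n‖ / t) ^ p / p) :=
                  mul_le_mul_of_nonneg_left h2 ht0.le
              _ = t * (‖a n‖ ^ q / q) + t * (‖Z n‖ ^ p / (S * p)) := by
                  rw [h3, mul_add, div_div]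
          have hb1 : Summable fun n => t * (‖a n‖ ^ q / q) :=
            (hasum.div_const q).mul_left t
          have hb2 : Summable fun n => t * (‖Z n‖ ^ p / (S * p)) :=
            (hZsum.div_const (S * p)).mul_left t
          have hsn : Summable fun n => ‖a n • Z n‖ :=
            Summable.of_nonneg_of_le (fun n => norm_nonneg _) hyoung (hb1.add hb2)
          have htsum_bound :
              (∑' n, (t * (‖a n‖ ^ q / q) + t * (‖Z n‖ ^ p / (S * p)))) ≤ t := by
            rw [Summable.tsum_add hb1 hb2, tsum_mul_left, tsum_mul_left, tsum_div_const,
              tsum_div_const]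
            have hA : (∑' n, ‖a n‖ ^ q) / q ≤ 1 / q := by
              gcongr
            have hB : S / (S * p) = 1 / p := by
              rw [div_mul_eq_div_div, div_self hS.ne']
            calc t * ((∑' n, ‖a n‖ ^ q) / q) + t * ((∑' n, ‖Z n‖ ^ p) / (S * p))
                ≤ t * (1 / q) + t * (1 / p) := by
                  rw [← hSdef, hB]
                  exact add_le_add (mul_le_mul_of_nonneg_left hA ht0.le) le_rfl
              _ = t := by
                  rw [one_div, one_div, ← mul_add, add_comm, hconj.inv_add_inv_eq_one,
                    mul_one]
          calc ‖g x‖ * ‖y‖ = ‖g x • y‖ := hnorm_eq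
            _ = ‖∑' n, a n • Z n‖ := by rw [hsuma.tsum_eq]
            _ ≤ ∑' n, ‖a n • Z n‖ := norm_tsum_le_tsum_norm hsn
            _ ≤ ∑' n, (t * (‖a n‖ ^ q / q) + t * (‖Z n‖ ^ p / (S * p))) :=
                Summable.tsum_le_tsum hyoung hsn (hb1.add hb2)
            _ ≤ t := htsum_bound
    -- from the pointwise bound to the sup
    by_cases hy : ‖y‖ = 0
    · rw [hy, mul_zero]
      exact Real.rpow_nonneg hS0 _
    · have hy' : 0 < ‖y‖ := lt_of_le_of_ne (norm_nonneg _) (Ne.symm hy)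
      have hMle : M ≤ S ^ (1 / p) / ‖y‖ := by
        refine csSup_le hne ?_
        rintro _ ⟨x, hx, rfl⟩
        rw [le_div_iff₀ hy']
        exact hpt x hx
      calc M * ‖y‖ ≤ (S ^ (1 / p) / ‖y‖) * ‖y‖ :=
            mul_le_mul_of_nonneg_right hMle (norm_nonneg _)
        _ = S ^ (1 / p) := div_mul_cancel₀ _ hy
  refine ⟨hg.smul_const y, ⟨Y, hYsum, hsub⟩, ?_⟩
  have hbb : BddBelow {r | ∃ z : ℕ → F, Summable (fun n => ‖z n‖ ^ p) ∧
      ((fun x => g x • y) '' U) ⊆ pConv p z ∧ r = (∑' n, ‖z n‖ ^ p) ^ (1 / p)} := by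
    refine ⟨0, ?_⟩
    rintro r ⟨z, hz, hsz, rfl⟩
    exact Real.rpow_nonneg (tsum_nonneg fun n => Real.rpow_nonneg (norm_nonneg _) p) _
  exact le_antisymm (csInf_le hbb hmem) (le_csInf ⟨_, hmem⟩ hlow)
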